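/- Let v and u be K-adjacent x-vertices (some K-edge joins v and u), and suppose a(v, K, K, 0) ≤ R and a(v, I, K, 0) ≤ R. Then for every feasible solution x*, the output values of the local algorithm satisfy x_v + x_u ≥ ω(x*). -/

import Mathlib

/-- An undirected multigraph with two-coloured vertices and two-coloured edges.
`isX v` means `v` is an x-vertex (otherwise `v` is a 0-vertex);
`isK e` means `e` is a K-edge (otherwise `e` is an I-edge). -/
structure ColoredMultigraph (V : Type) (E : Type) where
  ends : E → Sym2 V
  isX : V → Prop
  isK : E → Prop

namespace ColoredMultigraph

variable {V E : Type} (G : ColoredMultigraph V E)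

/-- Edge `e` joins vertices `a` and `b`. -/
def Joins (e : E) (a b : V) : Prop := G.ends e = s(a, b)

/-- `AltWalk G v c c' u n` : there is an alternating walk from `v` to `u` whose
first edge has colour `c` (`true` = K-edge, `false` = I-edge), whose last edge
has colour `c'`, and whose K-length (number of K-edges) is `n`. -/
inductive AltWalk : V → Bool → Bool → V → ℕ → Prop
  | single (e : E) (a b : V) (c : Bool) :
      G.Joins e a b → (G.isK e ↔ c = true) → AltWalk a c c b (cond c 1 0)
  | cons (e : E) (a b : V) (c c' : Bool) (u : V) (n : ℕ) :
      G.Joins e a b → (G.isK e ↔ c = true) → AltWalk b (!c) c' u n →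
      AltWalk a c c' u (cond c 1 0 + n)

/-- `a(v,X,Y,0)` : the minimum K-length of a `(v,X,Y,0)`-walk, that is, a walk
from `v` to some 0-vertex starting with an X-edge and ending with a Y-edge
(`∞` if no such walk exists). -/
noncomputable def walkInf (v : V) (X Y : Bool) : ℕ∞ :=
  sInf {n : ℕ∞ | ∃ m : ℕ, n = m ∧ ∃ u, G.AltWalk v X Y u m ∧ ¬ G.isX u}

/-- `A(v,X)` : the maximum K-length of an alternating walk starting at `v` with
an X-edge (`∞` if walks of arbitrarily large K-length exist). -/
noncomputable def walkSup (v : V) (X : Bool) : ℕ∞ :=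
  sSup {n : ℕ∞ | ∃ m : ℕ, n = m ∧ ∃ Y u, G.AltWalk v X Y u m}

/-- `b(v,X,Y,0) = min {a(v,X,Y,0), R}`. -/
noncomputable def bnd (R : ℕ) (v : V) (X Y : Bool) : ℕ∞ :=
  min (G.walkInf v X Y) (R : ℕ∞)

/-- `B(v,X) = min {A(v,X), R}`. -/
noncomputable def Bnd (R : ℕ) (v : V) (X : Bool) : ℕ∞ :=
  min (G.walkSup v X) (R : ℕ∞)

/-- The value `p_v` chosen by the local algorithm:
`p_v = b(v,I,K,0)` if `a(v,K,K,0) ≤ R`, and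
`p_v = min {b(v,I,K,0), B(v,K)}` otherwise. -/
noncomputable def pv (R : ℕ) (v : V) : ℕ∞ :=
  if G.walkInf v true true ≤ (R : ℕ∞) then G.bnd R v false true
  else min (G.bnd R v false true) (G.Bnd R v true)

/-- The value `q_v` chosen by the local algorithm:
`q_v = b(v,K,K,0)` if `a(v,I,K,0) ≤ R`, and
`q_v = min {b(v,K,K,0), B(v,I)}` otherwise. -/
noncomputable def qv (R : ℕ) (v : V) : ℕ∞ :=
  if G.walkInf v false true ≤ (R : ℕ∞) then G.bnd R v true true
  else min (G.bnd R v true true) (G.Bnd R v false)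

open Classical in
/-- The output value of the local algorithm: `p_v / (p_v + q_v)` at an x-vertex
`v`, and `0` at a 0-vertex. -/
noncomputable def xval (R : ℕ) (v : V) : ℝ :=
  if G.isX v then
    ((G.pv R v).toNat : ℝ) / (((G.pv R v).toNat : ℝ) + ((G.qv R v).toNat : ℝ))
  else 0

/-- Structural assumptions: every x-vertex is incident to at least one K-edge
and at least one I-edge, every 0-vertex is incident to exactly one edge, and
every edge has at least one x-vertex endpoint. -/
def WellFormed : Prop :=
  (∀ v, G.isX v → ∃ e, v ∈ G.ends e ∧ G.isK e) ∧
  (∀ v, G.isX v → ∃ e, v ∈ G.ends e ∧ ¬ G.isK e) ∧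
  (∀ v, ¬ G.isX v → ∃! e, v ∈ G.ends e) ∧
  (∀ e a b, G.Joins e a b → G.isX a ∨ G.isX b)

/-- A feasible solution: nonnegative, zero at 0-vertices, and satisfying
`x a + x b ≤ 1` for every I-edge `{a, b}`. -/
def Feasible (x : V → ℝ) : Prop :=
  (∀ a, 0 ≤ x a) ∧ (∀ a, ¬ G.isX a → x a = 0) ∧
  (∀ e a b, G.Joins e a b → ¬ G.isK e → x a + x b ≤ 1)

/-- The utility `ω(x)` of a solution: the minimum (infimum) over K-edges
`{a, b}` of `x a + x b`. -/
noncomputable def utility (x : V → ℝ) : ℝ :=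
  sInf {r : ℝ | ∃ e a b, G.Joins e a b ∧ G.isK e ∧ r = x a + x b}

end ColoredMultigraph

namespace ColoredMultigraph
variable {V E : Type} (G : ColoredMultigraph V E)

lemma joins_symm {e : E} {a b : V} (h : G.Joins e a b) : G.Joins e b a := by
  unfold Joins at *; rw [h, Sym2.eq_swap]

lemma altWalk_pos {a : V} {c c' : Bool} {u : V} {n : ℕ}
    (h : G.AltWalk a c c' u n) (hc : c' = true) : 1 ≤ n := by
  induction h with
  | single e a b c hj hk => subst hc; simp
  | cons e a b c c' u n hj hk ht ih =>
    have := ih hc; cases c <;> simp <;> omega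

lemma walkInf_spec (v : V) (X Y : Bool) (h : G.walkInf v X Y ≠ ⊤) :
    ∃ m : ℕ, G.walkInf v X Y = m ∧ ∃ w, G.AltWalk v X Y w m ∧ ¬ G.isX w := by
  set T := {m : ℕ | ∃ w, G.AltWalk v X Y w m ∧ ¬ G.isX w} with hT
  have hTne : T.Nonempty := by
    by_contra hTe
    apply h
    have he : {n : ℕ∞ | ∃ m : ℕ, n = m ∧ ∃ w, G.AltWalk v X Y w m ∧ ¬ G.isX w} = ∅ := by
      ext n
      simp only [Set.mem_setOf_eq, Set.mem_empty_iff_false, iff_false]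
      rintro ⟨m, rfl, hm⟩
      exact hTe ⟨m, hm⟩
    unfold walkInf
    rw [he, sInf_empty]
  refine ⟨sInf T, ?_, Nat.sInf_mem hTne⟩
  apply le_antisymm
  · exact sInf_le ⟨sInf T, rfl, Nat.sInf_mem hTne⟩
  · refine le_sInf ?_
    rintro n ⟨m, rfl, hm⟩
    exact_mod_cast Nat.sInf_le hm

lemma walk_bound (x : V → ℝ) (ω : ℝ)
    (hK : ∀ e a b, G.Joins e a b → G.isK e → ω ≤ x a + x b)
    (hI : ∀ e a b, G.Joins e a b → ¬ G.isK e → x a + x b ≤ 1)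
    (h0 : ∀ a, ¬ G.isX a → x a = 0)
    {a : V} {c c' : Bool} {u : V} {n : ℕ}
    (hw : G.AltWalk a c c' u n) (hc' : c' = true) (hu : ¬ G.isX u) :
    (n : ℝ) * ω ≤ (cond c (x a - 1) (-(x a))) + n := by
  induction hw with
  | single e a b c hj hk =>
    subst hc'
    have h1 : ω ≤ x a + x b := hK e a b hj (hk.mpr rfl)
    have h2 : x b = 0 := h0 b hu
    simp only [cond_true, Nat.cast_one]
    linarith
  | cons e a b c c' w n hj hk ht ih =>
    have ihn := ih hc' hu
    cases c with
    | true =>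
      have h1 : ω ≤ x a + x b := hK e a b hj (hk.mpr rfl)
      simp only [Bool.not_true, cond_false] at ihn
      simp only [cond_true, Nat.cast_add, Nat.cast_one]
      linarith
    | false =>
      have h1 : x a + x b ≤ 1 := hI e a b hj (fun hKe => by simpa using hk.mp hKe)
      simp only [Bool.not_false, cond_true] at ihn
      simp only [cond_false, Nat.cast_add, Nat.cast_zero, zero_add]
      linarith

end ColoredMultigraph

/-- Let `v` and `u` be K-adjacent x-vertices, and suppose
`a(v,K,K,0) ≤ R` and `a(v,I,K,0) ≤ R`. Then for every feasible solution `x*`,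
the output values of the local algorithm satisfy `x_v + x_u ≥ ω(x*)`. -/
theorem stmt_13 {V E : Type} (G : ColoredMultigraph V E) (hG : G.WellFormed)
    (R : ℕ) (hR : 1 ≤ R) (v u : V) (hv : G.isX v) (hu : G.isX u)
    (hadj : ∃ e, G.Joins e v u ∧ G.isK e)
    (haKK : G.walkInf v true true ≤ (R : ℕ∞))
    (haIK : G.walkInf v false true ≤ (R : ℕ∞))
    (xstar : V → ℝ) (hxstar : G.Feasible xstar) :
    G.utility xstar ≤ G.xval R v + G.xval R u := by
  obtain ⟨hpos, h0, hIe⟩ := hxstar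
  obtain ⟨e0, he0, he0K⟩ := hadj
  set x := xstar with hx
  set ω := G.utility xstar with hω
  -- basic fact: ω is below every K-edge sum
  have hBdd : BddBelow {r : ℝ | ∃ e a b, G.Joins e a b ∧ G.isK e ∧ r = x a + x b} := by
    refine ⟨0, ?_⟩
    rintro r ⟨e, a, b, hj, hK, rfl⟩
    have := hpos a; have := hpos b; linarith
  have hωle : ∀ e a b, G.Joins e a b → G.isK e → ω ≤ x a + x b := by
    intro e a b hj hK
    exact csInf_le hBdd ⟨e, a, b, hj, hK, rfl⟩
  -- extract optimal walks at v
  have hkne : G.walkInf v false true ≠ ⊤ := fun h => by simp [h] at haIK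
  have hqne : G.walkInf v true true ≠ ⊤ := fun h => by simp [h] at haKK
  obtain ⟨k, hk_eq, wk, hwk, hwk0⟩ := G.walkInf_spec v false true hkne
  obtain ⟨q, hq_eq, wq, hwq, hwq0⟩ := G.walkInf_spec v true true hqne
  have hkR : k ≤ R := by rw [hk_eq] at haIK; exact_mod_cast haIK
  have hqR : q ≤ R := by rw [hq_eq] at haKK; exact_mod_cast haKK
  have hk1 : 1 ≤ k := G.altWalk_pos hwk rfl
  have hq1 : 1 ≤ q := G.altWalk_pos hwq rfl
  -- values at v
  have hpv : G.pv R v = (k : ℕ∞) := by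
    rw [ColoredMultigraph.pv, if_pos haKK, ColoredMultigraph.bnd, hk_eq,
      min_eq_left (by exact_mod_cast hkR)]
  have hqv : G.qv R v = (q : ℕ∞) := by
    rw [ColoredMultigraph.qv, if_pos haIK, ColoredMultigraph.bnd, hq_eq,
      min_eq_left (by exact_mod_cast hqR)]
  -- walks at u by prepending the K-edge
  have hWuKK : G.AltWalk u true true wk (1 + k) := by
    have := ColoredMultigraph.AltWalk.cons (G := G) e0 u v true true wk k
      (G.joins_symm he0) (iff_of_true he0K rfl) (by simpa using hwk)
    simpa using this
  have hInf_uTT : G.walkInf u true true ≤ ((1 + k : ℕ) : ℕ∞) :=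
    sInf_le ⟨1 + k, rfl, wk, hWuKK, hwk0⟩
  have hSup_uT : ((1 + k : ℕ) : ℕ∞) ≤ G.walkSup u true :=
    le_sSup ⟨1 + k, rfl, true, wk, hWuKK⟩
  -- lower bound on walkInf u false true
  have hInf_uFT : ((q - 1 : ℕ) : ℕ∞) ≤ G.walkInf u false true := by
    refine le_sInf ?_
    rintro n ⟨m, rfl, w, hw, hw0⟩
    have hWv : G.AltWalk v true true w (1 + m) := by
      have := ColoredMultigraph.AltWalk.cons (G := G) e0 v u true true w m
        he0 (iff_of_true he0K rfl) (by simpa using hw)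
      simpa using this
    have : G.walkInf v true true ≤ ((1 + m : ℕ) : ℕ∞) :=
      sInf_le ⟨1 + m, rfl, w, hWv, hw0⟩
    rw [hq_eq] at this
    have hqm : q ≤ 1 + m := by exact_mod_cast this
    exact_mod_cast Nat.sub_le_of_le_add (by omega)
  -- bounds on pv u, qv u
  have hpuR : G.pv R u ≤ (R : ℕ∞) := by
    rw [ColoredMultigraph.pv]
    split_ifs
    · exact min_le_right _ _
    · exact le_trans (min_le_left _ _) (min_le_right _ _)
  have hpu : ((q - 1 : ℕ) : ℕ∞) ≤ G.pv R u := by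
    have hq1R : ((q - 1 : ℕ) : ℕ∞) ≤ (R : ℕ∞) := by
      have : q - 1 ≤ R := by omega
      exact_mod_cast this
    rw [ColoredMultigraph.pv]
    split_ifs with h
    · exact le_min hInf_uFT hq1R
    · have hRk : R ≤ k := by
        have h1k : ¬ ((1 + k : ℕ) : ℕ∞) ≤ (R : ℕ∞) := fun hh => h (hInf_uTT.trans hh)
        by_contra hc
        exact h1k (by exact_mod_cast (show 1 + k ≤ R by omega))
      refine le_min (le_min hInf_uFT hq1R) (le_min ?_ hq1R)
      refine le_trans ?_ hSup_uT
      have : q - 1 ≤ 1 + k := by omega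
      exact_mod_cast this
  have hqu : G.qv R u ≤ ((1 + k : ℕ) : ℕ∞) := by
    rw [ColoredMultigraph.qv]
    split_ifs
    · exact le_trans (min_le_left _ _) hInf_uTT
    · exact le_trans (le_trans (min_le_left _ _) (min_le_left _ _)) hInf_uTT
  -- pass to natural numbers
  set P := (G.pv R u).toNat with hP
  set Q := (G.qv R u).toNat with hQ
  have hPge : q - 1 ≤ P := by
    have := ENat.toNat_le_toNat hpu (ne_top_of_le_ne_top (ENat.coe_ne_top R) hpuR)
    simpa only [ENat.toNat_coe] using this
  have hQle : Q ≤ 1 + k := by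
    have := ENat.toNat_le_toNat hqu (ENat.coe_ne_top (1 + k))
    simpa only [ENat.toNat_coe] using this
  -- the two walk bounds at v
  have hbq := G.walk_bound x ω hωle hIe h0 hwq rfl hwq0
  have hbk := G.walk_bound x ω hωle hIe h0 hwk rfl hwk0
  simp only [cond_true, cond_false] at hbq hbk
  -- master inequality
  have hmaster : ((k : ℝ) + q) * ω ≤ (k : ℝ) + q - 1 := by nlinarith
  -- compute xval
  rw [ColoredMultigraph.xval, if_pos hv, ColoredMultigraph.xval, if_pos hu,
    hpv, hqv]
  simp only [ENat.toNat_coe]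
  have hkq : (0 : ℝ) < (k : ℝ) + q := by positivity
  have hXu : ((q : ℝ) - 1) / ((k : ℝ) + q) ≤ (P : ℝ) / ((P : ℝ) + Q) := by
    rcases Nat.lt_or_ge q 2 with hq2 | hq2
    · have : q = 1 := by omega
      subst this
      simp only [Nat.cast_one, sub_self]
      rw [zero_div]
      positivity
    · have hP1 : 1 ≤ P := by omega
      have hPQ : (0 : ℝ) < (P : ℝ) + Q := by
        have : (1 : ℝ) ≤ (P : ℝ) := by exact_mod_cast hP1
        have : (0 : ℝ) ≤ (Q : ℝ) := by positivity
        linarith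
      rw [div_le_div_iff₀ hkq hPQ]
      have h1 : ((q : ℝ) - 1) ≤ (P : ℝ) := by
        have : ((q - 1 : ℕ) : ℝ) ≤ (P : ℝ) := by exact_mod_cast hPge
        have hq1' : ((q - 1 : ℕ) : ℝ) = (q : ℝ) - 1 := by
          have : (1 : ℕ) ≤ q := hq1
          push_cast [this]; ring
        linarith [hq1'.symm ▸ this]
      have h2 : (Q : ℝ) ≤ 1 + (k : ℝ) := by exact_mod_cast hQle
      have hq1R : (0 : ℝ) ≤ (q : ℝ) - 1 := by
        have : (1 : ℝ) ≤ (q : ℝ) := by exact_mod_cast hq1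
        linarith
      nlinarith
  have hωb : ω ≤ (k : ℝ) / ((k : ℝ) + q) + ((q : ℝ) - 1) / ((k : ℝ) + q) := by
    rw [← add_div, ← sub_le_iff_le_add'] at *
    rw [le_div_iff₀ hkq]
    calc ω * ((k:ℝ) + q) = ((k:ℝ) + q) * ω := by ring
    _ ≤ (k : ℝ) + q - 1 := hmaster
    _ = (k : ℝ) + ((q : ℝ) - 1) := by ring
  calc ω ≤ (k : ℝ) / ((k : ℝ) + q) + ((q : ℝ) - 1) / ((k : ℝ) + q) := hωb
    _ ≤ (k : ℝ) / ((k : ℝ) + q) + (P : ℝ) / ((P : ℝ) + Q) := by linarith
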